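/- Let an S₁×⋯×S_N-setting correlation scenario have finite outcome sets Λ_n and admit at least one normalized real-valued measure on Λ₁^{S₁}×⋯×Λ_N^{S_N} returning all of its joint distributions as marginals. Then γ_E = sup{|(1/B(Ψ))·Σ_{s₁,…,s_N} Σ_{(λ₁,…,λ_N)} ψ_{(s₁,…,s_N)}(λ₁,…,λ_N)·P_{(s₁,…,s_N)}(λ₁,…,λ_N)| : Ψ a family of real-valued functions on Λ₁×⋯×Λ_N with B(Ψ) ≠ 0}, where γ_E is the infimum of the total variation norms ‖μ‖_var over all such normalized measures μ. -/

import Mathlib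

open scoped ComplexOrder Matrix
open MeasureTheory ProbabilityTheory

namespace LqHV

/-- Entrywise tensor (Kronecker) product of a finite family of square complex matrices,
realized on the pi-type index. -/
def tprod {ι : Type} [Fintype ι] [DecidableEq ι] {κ : ι → Type} [∀ i, Fintype (κ i)]
    (X : ∀ i, Matrix (κ i) (κ i) ℂ) : Matrix (∀ i, κ i) (∀ i, κ i) ℂ :=
  fun a b => ∏ i, X i (a i) (b i)

/-- Elementary (product) vector of a family of vectors. -/
def tvec {ι : Type} [Fintype ι] [DecidableEq ι] {κ : ι → Type} (ψ : ∀ i, κ i → ℂ) : (∀ i, κ i) → ℂ :=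
  fun a => ∏ i, ψ i (a i)

/-- Tensor positivity of a matrix on a tensor product space. -/
def TensorPos {ι : Type} [Fintype ι] [DecidableEq ι] {κ : ι → Type} [∀ i, Fintype (κ i)]
    (Z : Matrix (∀ i, κ i) (∀ i, κ i) ℂ) : Prop :=
  ∀ ψ : ∀ i, κ i → ℂ, 0 ≤ star (tvec ψ) ⬝ᵥ Z.mulVec (tvec ψ)

/-- `C` is a covering of `Z`. -/
def IsCovering {ι : Type} [Fintype ι] [DecidableEq ι] {κ : ι → Type} [∀ i, Fintype (κ i)]
    (Z C : Matrix (∀ i, κ i) (∀ i, κ i) ℂ) : Prop :=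
  TensorPos C ∧ TensorPos (C + Z) ∧ TensorPos (C - Z)

/-- The covering norm. -/
noncomputable def covNorm {ι : Type} [Fintype ι] [DecidableEq ι] {κ : ι → Type} [∀ i, Fintype (κ i)]
    (Z : Matrix (∀ i, κ i) (∀ i, κ i) ℂ) : ℝ :=
  sInf ((fun C => (Matrix.trace C).re) '' {C | IsCovering Z C})

/-- The absolute value `√(Wᴴ W)` of a matrix. -/
noncomputable def matAbs {n : Type} [Fintype n] [DecidableEq n]
    (W : Matrix n n ℂ) : Matrix n n ℂ :=
  ((Matrix.posSemidef_conjTranspose_mul_self W).1.eigenvectorUnitary : Matrix n n ℂ) *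
    Matrix.diagonal (fun i => ((Real.sqrt
      ((Matrix.posSemidef_conjTranspose_mul_self W).1.eigenvalues i) : ℝ) : ℂ)) *
    (star (Matrix.posSemidef_conjTranspose_mul_self W).1.eigenvectorUnitary : Matrix n n ℂ)

/-- The trace norm `tr √(Wᴴ W)`. -/
noncomputable def traceNorm {n : Type} [Fintype n] [DecidableEq n]
    (W : Matrix n n ℂ) : ℝ :=
  ((matAbs W).trace).re

variable {N : ℕ}

/-- In the tensor product space `⊗_n (ℂ^{d n})^{⊗ S n}`, the operator that acts as `X n` in
slot `k n` of site `n` and as the identity elsewhere. -/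
def slot {d S : Fin N → ℕ} (X : ∀ n, Matrix (Fin (d n)) (Fin (d n)) ℂ) (k : ∀ n, Fin (S n)) :
    ∀ p : Σ n : Fin N, Fin (S n), Matrix (Fin (d p.1)) (Fin (d p.1)) ℂ :=
  fun p => if p.2 = k p.1 then X p.1 else 1

/-- `T` is an `S₁ × ⋯ × S_N`-setting source operator for the state `ρ`. -/
def IsSourceOp (d S : Fin N → ℕ) (ρ : Matrix (∀ n, Fin (d n)) (∀ n, Fin (d n)) ℂ)
    (T : Matrix (∀ p : Σ n : Fin N, Fin (S n), Fin (d p.1))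
          (∀ p : Σ n : Fin N, Fin (S n), Fin (d p.1)) ℂ) : Prop :=
  T.IsHermitian ∧
    ∀ (X : ∀ n, Matrix (Fin (d n)) (Fin (d n)) ℂ) (k : ∀ n, Fin (S n)),
      (T * tprod (slot X k)).trace = (ρ * tprod X).trace

/-- A POVM with finite outcome set. -/
def IsPOVM {d : ℕ} {Λ : Type} [Fintype Λ] (M : Λ → Matrix (Fin d) (Fin d) ℂ) : Prop :=
  (∀ l, (M l).PosSemidef) ∧ ∑ l, M l = 1

/-- Joint probability distributions of a quantum correlation scenario. -/
noncomputable def quantumP {d S : Fin N → ℕ} {Λ : Fin N → Type} [∀ n, Fintype (Λ n)]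
    (ρ : Matrix (∀ n, Fin (d n)) (∀ n, Fin (d n)) ℂ)
    (M : ∀ n, Fin (S n) → Λ n → Matrix (Fin (d n)) (Fin (d n)) ℂ)
    (s : ∀ n, Fin (S n)) (lam : ∀ n, Λ n) : ℝ :=
  ((ρ * tprod (fun n => M n (s n) (lam n))).trace).re

/-- A real-valued (signed) measure on the finite set `∏_n Λ_n^{S n}` is normalized. -/
def Normalized {S : Fin N → ℕ} {Λ : Fin N → Type} [∀ n, Fintype (Λ n)] [∀ n, DecidableEq (Λ n)]
    (μ : (∀ n, Fin (S n) → Λ n) → ℝ) : Prop :=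
  ∑ ω, μ ω = 1

/-- `μ` returns all joint distributions `P` of the scenario as the corresponding marginals. -/
def ReturnsMarginals {S : Fin N → ℕ} {Λ : Fin N → Type} [∀ n, Fintype (Λ n)]
    [∀ n, DecidableEq (Λ n)]
    (μ : (∀ n, Fin (S n) → Λ n) → ℝ) (P : (∀ n, Fin (S n)) → (∀ n, Λ n) → ℝ) : Prop :=
  ∀ (s : ∀ n, Fin (S n)) (lam : ∀ n, Λ n),
    (∑ ω : ∀ n, Fin (S n) → Λ n, if (fun n => ω n (s n)) = lam then μ ω else 0) = P s lam

/-- The total variation norm of a real-valued measure on a finite set. -/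
noncomputable def varNorm {S : Fin N → ℕ} {Λ : Fin N → Type} [∀ n, Fintype (Λ n)]
    [∀ n, DecidableEq (Λ n)] (μ : (∀ n, Fin (S n) → Λ n) → ℝ) : ℝ :=
  ∑ ω, |μ ω|

/-- The parameter `γ_E`: the infimum of the total variation norms over all normalized
real-valued measures returning all joint distributions of the scenario as marginals. -/
noncomputable def gammaE {S : Fin N → ℕ} {Λ : Fin N → Type} [∀ n, Fintype (Λ n)]
    [∀ n, DecidableEq (Λ n)] (P : (∀ n, Fin (S n)) → (∀ n, Λ n) → ℝ) : ℝ :=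
  sInf {t | ∃ μ, Normalized μ ∧ ReturnsMarginals μ P ∧ t = varNorm μ}

/-- Integration of a bounded function with respect to a signed measure, via the Jordan
decomposition. -/
noncomputable def signedIntegral {Ω : Type} [MeasurableSpace Ω] (ν : SignedMeasure Ω)
    (f : Ω → ℝ) : ℝ :=
  (∫ ω, f ω ∂ν.toJordanDecomposition.posPart) - ∫ ω, f ω ∂ν.toJordanDecomposition.negPart

/-- An `S₁ × ⋯ × S_N`-setting correlation scenario with finite outcome sets admits an LHV
(local hidden variable) model. -/
def AdmitsLHVFin {S : Fin N → ℕ} {Λ : Fin N → Type} [∀ n, Fintype (Λ n)]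
    (P : (∀ n, Fin (S n)) → (∀ n, Λ n) → ℝ) : Prop :=
  ∃ (Ω : Type) (_ : MeasurableSpace Ω) (ν : Measure Ω) (_ : IsProbabilityMeasure ν)
    (p : ∀ n, Fin (S n) → Ω → Λ n → ℝ),
    (∀ n s ω l, 0 ≤ p n s ω l) ∧ (∀ n s ω, ∑ l, p n s ω l = 1) ∧
    (∀ n s l, Measurable fun ω => p n s ω l) ∧
    ∀ (s : ∀ n, Fin (S n)) (lam : ∀ n, Λ n),
      P s lam = ∫ ω, ∏ n, p n (s n) ω (lam n) ∂ν

/-- An `S₁ × ⋯ × S_N`-setting correlation scenario with finite outcome sets admits an LqHV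
(local quasi hidden variable) model. -/
def AdmitsLqHVFin {S : Fin N → ℕ} {Λ : Fin N → Type} [∀ n, Fintype (Λ n)]
    (P : (∀ n, Fin (S n)) → (∀ n, Λ n) → ℝ) : Prop :=
  ∃ (Ω : Type) (_ : MeasurableSpace Ω) (ν : SignedMeasure Ω)
    (p : ∀ n, Fin (S n) → Ω → Λ n → ℝ),
    ν Set.univ = 1 ∧
    (∀ n s ω l, 0 ≤ p n s ω l) ∧ (∀ n s ω, ∑ l, p n s ω l = 1) ∧
    (∀ n s l, Measurable fun ω => p n s ω l) ∧
    ∀ (s : ∀ n, Fin (S n)) (lam : ∀ n, Λ n),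
      P s lam = signedIntegral ν fun ω => ∏ n, p n (s n) ω (lam n)

end LqHV

namespace LqHV

variable {N : ℕ}

/-- The LHV constant `B_sup(Ψ)`: the supremum over all configurations
`(λ_n^{(s_n)}) ∈ ∏_n Λ_n^{S_n}` of `∑_{s₁,…,s_N} ψ_{(s₁,…,s_N)}(λ₁^{(s₁)},…,λ_N^{(s_N)})`. -/
noncomputable def bellSup {S : Fin N → ℕ} {Λ : Fin N → Type} [∀ n, Fintype (Λ n)]
    (ψ : (∀ n, Fin (S n)) → (∀ n, Λ n) → ℝ) : ℝ :=
  sSup (Set.range fun lam : ∀ n, Fin (S n) → Λ n =>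
    ∑ s : ∀ n, Fin (S n), ψ s fun n => lam n (s n))

/-- The LHV constant `B_inf(Ψ)`. -/
noncomputable def bellInf {S : Fin N → ℕ} {Λ : Fin N → Type} [∀ n, Fintype (Λ n)]
    (ψ : (∀ n, Fin (S n)) → (∀ n, Λ n) → ℝ) : ℝ :=
  sInf (Set.range fun lam : ∀ n, Fin (S n) → Λ n =>
    ∑ s : ∀ n, Fin (S n), ψ s fun n => lam n (s n))

/-- The LHV constant `B(Ψ) = max{|B_sup(Ψ)|, |B_inf(Ψ)|}`. -/
noncomputable def bellB {S : Fin N → ℕ} {Λ : Fin N → Type} [∀ n, Fintype (Λ n)]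
    (ψ : (∀ n, Fin (S n)) → (∀ n, Λ n) → ℝ) : ℝ :=
  max |bellSup ψ| |bellInf ψ|

end LqHV

namespace GammaAux

open LqHV

variable {N : ℕ} {S : Fin N → ℕ} {Λ : Fin N → Type} [∀ n, Fintype (Λ n)]
  [∀ n, DecidableEq (Λ n)]

/-- The Bell functional on hidden-variable configurations. -/
noncomputable def Fpsi (ψ : (∀ n, Fin (S n)) → (∀ n, Λ n) → ℝ)
    (ω : ∀ n, Fin (S n) → Λ n) : ℝ :=
  ∑ s : ∀ n, Fin (S n), ψ s fun n => ω n (s n)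

lemma bellSup_eq (ψ : (∀ n, Fin (S n)) → (∀ n, Λ n) → ℝ) :
    bellSup ψ = sSup (Set.range (Fpsi ψ)) := rfl

lemma bellInf_eq (ψ : (∀ n, Fin (S n)) → (∀ n, Λ n) → ℝ) :
    bellInf ψ = sInf (Set.range (Fpsi ψ)) := rfl

lemma abs_Fpsi_le (ψ : (∀ n, Fin (S n)) → (∀ n, Λ n) → ℝ) (ω : ∀ n, Fin (S n) → Λ n) :
    |Fpsi ψ ω| ≤ bellB ψ := by
  have h1 : Fpsi ψ ω ≤ bellSup ψ :=
    le_csSup ((Set.finite_range _).bddAbove) ⟨ω, rfl⟩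
  have h2 : bellInf ψ ≤ Fpsi ψ ω :=
    csInf_le ((Set.finite_range _).bddBelow) ⟨ω, rfl⟩
  have h3 : bellSup ψ ≤ |bellSup ψ| := le_abs_self _
  have h4 : -|bellInf ψ| ≤ bellInf ψ := neg_abs_le _
  have h5 : |bellSup ψ| ≤ bellB ψ := le_max_left _ _
  have h6 : |bellInf ψ| ≤ bellB ψ := le_max_right _ _
  rw [abs_le]
  constructor <;> linarith

lemma exists_abs_Fpsi (ψ : (∀ n, Fin (S n)) → (∀ n, Λ n) → ℝ)
    [Nonempty (∀ n, Fin (S n) → Λ n)] :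
    ∃ ω, bellB ψ ≤ |Fpsi ψ ω| := by
  have h1 : bellSup ψ ∈ Set.range (Fpsi ψ) :=
    (Set.range_nonempty _).csSup_mem (Set.finite_range _)
  have h2 : bellInf ψ ∈ Set.range (Fpsi ψ) :=
    (Set.range_nonempty _).csInf_mem (Set.finite_range _)
  obtain ⟨ω₁, hω₁⟩ := h1
  obtain ⟨ω₂, hω₂⟩ := h2
  rcases le_total |bellSup ψ| |bellInf ψ| with h | h
  · exact ⟨ω₂, by rw [hω₂]; exact max_le h le_rfl⟩
  · exact ⟨ω₁, by rw [hω₁]; exact max_le le_rfl h⟩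

lemma bellB_nonneg (ψ : (∀ n, Fin (S n)) → (∀ n, Λ n) → ℝ) : 0 ≤ bellB ψ :=
  le_trans (abs_nonneg _) (le_max_left _ _)

/-- Pairing identity: the Bell expression evaluated on the correlations equals the
integral of the Bell functional against any measure with the right marginals. -/
lemma pairing {μ : (∀ n, Fin (S n) → Λ n) → ℝ} {P : (∀ n, Fin (S n)) → (∀ n, Λ n) → ℝ}
    (hμ : ReturnsMarginals μ P) (ψ : (∀ n, Fin (S n)) → (∀ n, Λ n) → ℝ) :
    ∑ s : ∀ n, Fin (S n), ∑ lam : ∀ n, Λ n, ψ s lam * P s lam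
      = ∑ ω, μ ω * Fpsi ψ ω := by
  have key : ∀ s : ∀ n, Fin (S n),
      ∑ lam : ∀ n, Λ n, ψ s lam * P s lam
        = ∑ ω, μ ω * ψ s fun n => ω n (s n) := by
    intro s
    calc ∑ lam : ∀ n, Λ n, ψ s lam * P s lam
        = ∑ lam : ∀ n, Λ n, ∑ ω, ψ s lam *
            (if (fun n => ω n (s n)) = lam then μ ω else 0) := by
          refine Finset.sum_congr rfl fun lam _ => ?_
          rw [← Finset.mul_sum, hμ s lam]
      _ = ∑ ω, ∑ lam : ∀ n, Λ n,
            (if (fun n => ω n (s n)) = lam then μ ω * ψ s lam else 0) := by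
          rw [Finset.sum_comm]
          refine Finset.sum_congr rfl fun ω _ => Finset.sum_congr rfl fun lam _ => ?_
          split_ifs <;> ring
      _ = ∑ ω, μ ω * ψ s fun n => ω n (s n) := by
          refine Finset.sum_congr rfl fun ω _ => ?_
          exact Finset.sum_ite_eq _ _ _ |>.trans (if_pos (Finset.mem_univ _))
  calc ∑ s : ∀ n, Fin (S n), ∑ lam : ∀ n, Λ n, ψ s lam * P s lam
      = ∑ s : ∀ n, Fin (S n), ∑ ω, μ ω * ψ s fun n => ω n (s n) :=
        Finset.sum_congr rfl fun s _ => key s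
    _ = ∑ ω, μ ω * Fpsi ψ ω := by
        rw [Finset.sum_comm]
        refine Finset.sum_congr rfl fun ω _ => ?_
        rw [Fpsi, Finset.mul_sum]

/-- Evaluation of a linear functional on a finite-dimensional function space. -/
lemma linear_eval {ι : Type} [Fintype ι] [DecidableEq ι]
    (g : (ι → ℝ) →ₗ[ℝ] ℝ) (x : ι → ℝ) :
    g x = ∑ i, x i * g (Pi.single i 1) := by
  have hx : x = ∑ i, Pi.single i (x i) := by
    ext j
    rw [Finset.sum_apply]
    exact (Fintype.sum_pi_single j x).symm
  conv_lhs => rw [hx]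
  rw [map_sum]
  refine Finset.sum_congr rfl fun i _ => ?_
  have : Pi.single i (x i) = x i • (Pi.single i 1 : ι → ℝ) := by
    ext j
    by_cases h : j = i <;> simp [Pi.single_apply, h]
  rw [this, g.map_smul, smul_eq_mul]

end GammaAux

open LqHV in
/-- **Lemma 3.** For an `S₁ × ⋯ × S_N`-setting correlation scenario with finite outcome sets
admitting at least one normalized real-valued measure returning all its joint distributions
as marginals, the parameter `γ_E` equals the supremum of the normalized absolute Bell
expressions `|Σ_s ⟨ψ_s⟩ / B(Ψ)|` over all non-trivial families `Ψ`. -/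
theorem gammaE_eq_sup_bell_ratio {N : ℕ} (S : Fin N → ℕ) (hS : ∀ n, 1 ≤ S n)
    {Λ : Fin N → Type} [∀ n, Fintype (Λ n)] [∀ n, DecidableEq (Λ n)]
    (P : (∀ n, Fin (S n)) → (∀ n, Λ n) → ℝ)
    (hP0 : ∀ s lam, 0 ≤ P s lam) (hP1 : ∀ s, ∑ lam, P s lam = 1)
    (hex : ∃ μ, Normalized μ ∧ ReturnsMarginals μ P) :
    gammaE P = sSup {x : ℝ | ∃ ψ : (∀ n, Fin (S n)) → (∀ n, Λ n) → ℝ,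
      bellB ψ ≠ 0 ∧
      x = |(∑ s : ∀ n, Fin (S n), ∑ lam : ∀ n, Λ n, ψ s lam * P s lam) / bellB ψ|} := by
  classical
  obtain ⟨μ₀, hμ₀n, hμ₀m⟩ := hex
  -- nonemptiness of the relevant types
  have hLne : Nonempty (∀ n, Λ n) := by
    by_contra h
    have : IsEmpty (∀ n, Λ n) := not_nonempty_iff.mp h
    have h1 := hP1 fun n => ⟨0, hS n⟩
    rw [Finset.univ_eq_empty, Finset.sum_empty] at h1
    exact one_ne_zero h1.symm
  have hΩne : Nonempty (∀ n, Fin (S n) → Λ n) := ⟨fun n _ => hLne.some n⟩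
  have hσne : Nonempty (∀ n, Fin (S n)) := ⟨fun n => ⟨0, hS n⟩⟩
  haveI := hΩne
  set R : Set ℝ := {x : ℝ | ∃ ψ : (∀ n, Fin (S n)) → (∀ n, Λ n) → ℝ,
      bellB ψ ≠ 0 ∧
      x = |(∑ s : ∀ n, Fin (S n), ∑ lam : ∀ n, Λ n, ψ s lam * P s lam) / bellB ψ|}
    with hR
  set T : Set ℝ := {t | ∃ μ, Normalized μ ∧ ReturnsMarginals μ P ∧ t = varNorm μ} with hT
  -- `R` is nonempty
  have hB1 : bellB (fun (_ : ∀ n, Fin (S n)) (_ : ∀ n, Λ n) => (1:ℝ)) ≠ 0 := by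
    have hr : (Set.range fun lam : ∀ n, Fin (S n) → Λ n =>
        ∑ _s : ∀ n, Fin (S n), (1:ℝ)) = {(Fintype.card (∀ n, Fin (S n)) : ℝ)} := by
      have : (fun lam : ∀ n, Fin (S n) → Λ n => ∑ _s : ∀ n, Fin (S n), (1:ℝ))
          = fun _ => (Fintype.card (∀ n, Fin (S n)) : ℝ) := by
        funext lam; simp
      rw [this, Set.range_const]
    have hcard : ((Fintype.card (∀ n, Fin (S n)) : ℝ)) ≠ 0 := by
      exact_mod_cast Fintype.card_ne_zero
    simp only [bellB, bellSup, bellInf]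
    rw [show (Set.range fun lam : ∀ n, Fin (S n) → Λ n =>
        ∑ s : ∀ n, Fin (S n), (fun (_ : ∀ n, Fin (S n)) (_ : ∀ n, Λ n) => (1:ℝ)) s
          fun n => lam n (s n)) = {(Fintype.card (∀ n, Fin (S n)) : ℝ)} from hr,
      csSup_singleton, csInf_singleton, max_self, abs_ne_zero]
    exact hcard
  have hRne : R.Nonempty := ⟨_, fun _ _ => 1, hB1, rfl⟩
  have hTne : T.Nonempty := ⟨varNorm μ₀, μ₀, hμ₀n, hμ₀m, rfl⟩
  -- weak duality
  have key : ∀ x ∈ R, ∀ t ∈ T, x ≤ t := by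
    rintro x ⟨ψ, hB, rfl⟩ t ⟨μ, hn, hm, rfl⟩
    have hpair := GammaAux.pairing hm ψ
    have hBpos : 0 < bellB ψ := (GammaAux.bellB_nonneg ψ).lt_of_ne (Ne.symm hB)
    rw [abs_div, abs_of_pos hBpos, div_le_iff₀ hBpos]
    calc |∑ s : ∀ n, Fin (S n), ∑ lam : ∀ n, Λ n, ψ s lam * P s lam|
        = |∑ ω, μ ω * GammaAux.Fpsi ψ ω| := by rw [hpair]
      _ ≤ ∑ ω, |μ ω * GammaAux.Fpsi ψ ω| := Finset.abs_sum_le_sum_abs _ _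
      _ ≤ ∑ ω, |μ ω| * bellB ψ := Finset.sum_le_sum fun ω _ => by
            rw [abs_mul]
            exact mul_le_mul_of_nonneg_left (GammaAux.abs_Fpsi_le ψ ω) (abs_nonneg _)
      _ = varNorm μ * bellB ψ := by rw [varNorm, Finset.sum_mul]
  have hRb : BddAbove R := ⟨varNorm μ₀, fun x hx => key x hx _ ⟨μ₀, hμ₀n, hμ₀m, rfl⟩⟩
  have hTb : BddBelow T := by
    refine ⟨0, ?_⟩
    rintro t ⟨μ, _, _, rfl⟩
    exact Finset.sum_nonneg fun ω _ => abs_nonneg _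
  rw [gammaE, ← hT]
  refine le_antisymm ?_ (le_csInf hTne fun t ht => csSup_le hRne fun x hx => key x hx t ht)
  by_contra hcon
  push_neg at hcon
  set g' := (sSup R + sInf T) / 2 with hg'
  have hg'1 : sSup R < g' := by rw [hg']; linarith
  have hg'2 : g' < sInf T := by rw [hg']; linarith
  have hg0 : 0 ≤ sSup R := by
    obtain ⟨x, hx⟩ := hRne
    have h1 := le_csSup hRb hx
    obtain ⟨ψ, _, rfl⟩ := hx
    exact le_trans (abs_nonneg _) h1
  have hg'0 : 0 ≤ g' := by linarith
  -- the compact convex ball and the closed convex affine set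
  set sB : Set ((∀ n, Fin (S n) → Λ n) → ℝ) := {x | ∑ ω, |x ω| ≤ g'} with hsB
  set K : Set ((∀ n, Fin (S n) → Λ n) → ℝ) :=
    {μ | Normalized μ ∧ ReturnsMarginals μ P} with hK
  have hcont : Continuous fun x : (∀ n, Fin (S n) → Λ n) → ℝ => ∑ ω, |x ω| :=
    continuous_finset_sum _ fun ω _ => (continuous_apply ω).abs
  have hsBclosed : IsClosed sB := isClosed_le hcont continuous_const
  have hsBsub : sB ⊆ Metric.closedBall 0 g' := by
    intro x hx
    rw [Metric.mem_closedBall, dist_zero_right, pi_norm_le_iff_of_nonneg hg'0]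
    intro ω
    have h1 : ‖x ω‖ = |x ω| := rfl
    rw [h1]
    calc |x ω| ≤ ∑ ω', |x ω'| :=
          Finset.single_le_sum (f := fun ω' => |x ω'|) (fun ω' _ => abs_nonneg _) (Finset.mem_univ ω)
      _ ≤ g' := hx
  have hsBcompact : IsCompact sB :=
    (isCompact_closedBall (0 : (∀ n, Fin (S n) → Λ n) → ℝ) g').of_isClosed_subset
      hsBclosed hsBsub
  have hsBconv : Convex ℝ sB := by
    intro x hx y hy a b ha hb hab
    simp only [hsB, Set.mem_setOf_eq] at hx hy ⊢
    calc ∑ ω, |(a • x + b • y) ω| ≤ ∑ ω, (a * |x ω| + b * |y ω|) := by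
          refine Finset.sum_le_sum fun ω _ => ?_
          simp only [Pi.add_apply, Pi.smul_apply, smul_eq_mul]
          calc |a * x ω + b * y ω| ≤ |a * x ω| + |b * y ω| := abs_add_le _ _
            _ = a * |x ω| + b * |y ω| := by
                rw [abs_mul, abs_mul, abs_of_nonneg ha, abs_of_nonneg hb]
      _ = a * ∑ ω, |x ω| + b * ∑ ω, |y ω| := by
          rw [Finset.sum_add_distrib, Finset.mul_sum, Finset.mul_sum]
      _ ≤ a * g' + b * g' :=
          add_le_add (mul_le_mul_of_nonneg_left hx ha) (mul_le_mul_of_nonneg_left hy hb)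
      _ = g' := by rw [← add_mul, hab, one_mul]
  have hKclosed : IsClosed K := by
    have hKeq : K = {μ : (∀ n, Fin (S n) → Λ n) → ℝ | ∑ ω, μ ω = 1} ∩
        ⋂ (s : ∀ n, Fin (S n)), ⋂ (lam : ∀ n, Λ n),
          {μ : (∀ n, Fin (S n) → Λ n) → ℝ |
            (∑ ω, if (fun n => ω n (s n)) = lam then μ ω else 0) = P s lam} := by
      ext μ
      simp only [hK, Set.mem_setOf_eq, Set.mem_inter_iff, Set.mem_iInter, Normalized,
        ReturnsMarginals]
    rw [hKeq]
    refine IsClosed.inter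
      (isClosed_eq (continuous_finset_sum _ fun ω _ => continuous_apply ω) continuous_const)
      (isClosed_iInter fun s => isClosed_iInter fun lam =>
        isClosed_eq (continuous_finset_sum _ fun ω _ => ?_) continuous_const)
    by_cases h : (fun n => ω n (s n)) = lam
    · simp only [if_pos h]
      exact continuous_apply ω
    · simp only [if_neg h]
      exact continuous_const
  have hKconv : Convex ℝ K := by
    intro x hx y hy a b ha hb hab
    simp only [hK, Set.mem_setOf_eq] at hx hy ⊢
    obtain ⟨hx1, hx2⟩ := hx
    obtain ⟨hy1, hy2⟩ := hy
    constructor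
    · show ∑ ω, (a • x + b • y) ω = 1
      calc ∑ ω, (a • x + b • y) ω = ∑ ω, (a * x ω + b * y ω) := rfl
        _ = a * ∑ ω, x ω + b * ∑ ω, y ω := by
            rw [Finset.sum_add_distrib, ← Finset.mul_sum, ← Finset.mul_sum]
        _ = 1 := by rw [hx1, hy1, mul_one, mul_one, hab]
    · intro s lam
      calc ∑ ω, (if (fun n => ω n (s n)) = lam then (a • x + b • y) ω else 0)
          = ∑ ω, (a * (if (fun n => ω n (s n)) = lam then x ω else 0)
              + b * (if (fun n => ω n (s n)) = lam then y ω else 0)) := by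
            refine Finset.sum_congr rfl fun ω _ => ?_
            split_ifs <;> simp
        _ = a * (∑ ω, if (fun n => ω n (s n)) = lam then x ω else 0)
            + b * (∑ ω, if (fun n => ω n (s n)) = lam then y ω else 0) := by
            rw [Finset.sum_add_distrib, ← Finset.mul_sum, ← Finset.mul_sum]
        _ = P s lam := by rw [hx2 s lam, hy2 s lam, ← add_mul, hab, one_mul]
  have hdisj : Disjoint sB K := by
    rw [Set.disjoint_left]
    intro x hx1 hx2
    rw [hK, Set.mem_setOf_eq] at hx2
    have h1 : varNorm x ∈ T := ⟨x, hx2.1, hx2.2, rfl⟩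
    have h2 : sInf T ≤ varNorm x := csInf_le hTb h1
    have h3 : varNorm x ≤ g' := hx1
    have h4 : varNorm x = ∑ ω, |x ω| := rfl
    linarith
  obtain ⟨f, u, v, hfu, huv, hfv⟩ :=
    geometric_hahn_banach_compact_closed hsBconv hsBcompact hKconv hKclosed hdisj
  have hf_eval : ∀ x : (∀ n, Fin (S n) → Λ n) → ℝ,
      f x = ∑ ω, x ω * f (Pi.single ω 1) := fun x => GammaAux.linear_eval f.toLinearMap x
  -- the functional vanishes on directions of `K`
  have hdir : ∀ δ : (∀ n, Fin (S n) → Λ n) → ℝ,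
      (∀ (s : ∀ n, Fin (S n)) (lam : ∀ n, Λ n),
        (∑ ω, if (fun n => ω n (s n)) = lam then δ ω else 0) = 0) → f δ = 0 := by
    intro δ hδ
    have hsum0 : ∑ ω, δ ω = 0 := by
      obtain ⟨s₀⟩ := hσne
      have h1 : ∑ lam : ∀ n, Λ n, ∑ ω, (if (fun n => ω n (s₀ n)) = lam then δ ω else 0)
          = ∑ ω, δ ω := by
        rw [Finset.sum_comm]
        refine Finset.sum_congr rfl fun ω _ => ?_
        exact (Finset.sum_ite_eq _ _ _).trans (if_pos (Finset.mem_univ _))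
      rw [← h1]
      simp [hδ]
    have hKt : ∀ t : ℝ, μ₀ + t • δ ∈ K := by
      intro t
      rw [hK, Set.mem_setOf_eq]
      refine ⟨?_, ?_⟩
      · show ∑ ω, (μ₀ + t • δ) ω = 1
        calc ∑ ω, (μ₀ + t • δ) ω = ∑ ω, (μ₀ ω + t * δ ω) := rfl
          _ = ∑ ω, μ₀ ω + t * ∑ ω, δ ω := by rw [Finset.sum_add_distrib, Finset.mul_sum]
          _ = 1 := by rw [hμ₀n, hsum0, mul_zero, add_zero]
      · intro s lam
        calc ∑ ω, (if (fun n => ω n (s n)) = lam then (μ₀ + t • δ) ω else 0)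
            = ∑ ω, ((if (fun n => ω n (s n)) = lam then μ₀ ω else 0)
                + t * (if (fun n => ω n (s n)) = lam then δ ω else 0)) := by
              refine Finset.sum_congr rfl fun ω _ => ?_
              split_ifs <;> simp
          _ = (∑ ω, if (fun n => ω n (s n)) = lam then μ₀ ω else 0)
              + t * (∑ ω, if (fun n => ω n (s n)) = lam then δ ω else 0) := by
              rw [Finset.sum_add_distrib, ← Finset.mul_sum]
          _ = P s lam := by rw [hμ₀m s lam, hδ s lam, mul_zero, add_zero]
    by_contra hne
    have hlin : ∀ t : ℝ, v < f μ₀ + t * f δ := by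
      intro t
      have h2 := hfv _ (hKt t)
      rwa [map_add, f.map_smul, smul_eq_mul] at h2
    have h3 := hlin ((v - f μ₀ - 1) / f δ)
    rw [div_mul_cancel₀ _ hne] at h3
    linarith
  -- factor the functional through the marginal map
  let Φ : ((∀ n, Fin (S n) → Λ n) → ℝ) →ₗ[ℝ]
      (((∀ n, Fin (S n)) × (∀ n, Λ n)) → ℝ) :=
    { toFun := fun δ p => ∑ ω, if (fun n => ω n (p.1 n)) = p.2 then δ ω else 0
      map_add' := by
        intro x y
        funext p
        simp only [Pi.add_apply]
        rw [← Finset.sum_add_distrib]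
        refine Finset.sum_congr rfl fun ω _ => ?_
        split_ifs <;> simp
      map_smul' := by
        intro c x
        funext p
        simp only [RingHom.id_apply, Pi.smul_apply, smul_eq_mul]
        rw [Finset.mul_sum]
        refine Finset.sum_congr rfl fun ω _ => ?_
        split_ifs <;> simp }
  have hker : LinearMap.ker Φ ≤ LinearMap.ker f.toLinearMap := by
    intro δ hδ
    rw [LinearMap.mem_ker] at hδ ⊢
    exact hdir δ fun s lam => congrFun hδ (s, lam)
  obtain ⟨g, hg⟩ := LinearMap.exists_extend
    ((Submodule.liftQ (LinearMap.ker Φ) f.toLinearMap hker).comp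
      (Φ.quotKerEquivRange.symm : LinearMap.range Φ →ₗ[ℝ] _))
  have hgΦ : ∀ δ, g (Φ δ) = f δ := by
    intro δ
    have h3 : g (Φ δ) = ((Submodule.liftQ (LinearMap.ker Φ) f.toLinearMap hker).comp
        (Φ.quotKerEquivRange.symm : LinearMap.range Φ →ₗ[ℝ] _))
        ⟨Φ δ, LinearMap.mem_range_self Φ δ⟩ := by
      rw [← hg]; rfl
    rw [h3, LinearMap.comp_apply]
    have h4 := Φ.quotKerEquivRange_symm_apply_image δ (LinearMap.mem_range_self Φ δ)
    show Submodule.liftQ (LinearMap.ker Φ) f.toLinearMap hker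
        (Φ.quotKerEquivRange.symm ⟨Φ δ, LinearMap.mem_range_self Φ δ⟩) = f δ
    rw [h4, Submodule.mkQ_apply, Submodule.liftQ_apply]
    rfl
  set ψ : (∀ n, Fin (S n)) → (∀ n, Λ n) → ℝ :=
    fun s lam => g (Pi.single (s, lam) 1) with hψ
  have hF : ∀ ω, f (Pi.single ω 1) = GammaAux.Fpsi ψ ω := by
    intro ω
    rw [← hgΦ (Pi.single ω 1)]
    have hΦ1 : Φ (Pi.single ω 1)
        = fun p : (∀ n, Fin (S n)) × (∀ n, Λ n) =>
            if (fun n => ω n (p.1 n)) = p.2 then (1:ℝ) else 0 := by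
      funext p
      show (∑ ω', if (fun n => ω' n (p.1 n)) = p.2 then Pi.single ω (1:ℝ) ω' else 0) = _
      calc ∑ ω', (if (fun n => ω' n (p.1 n)) = p.2 then Pi.single ω (1:ℝ) ω' else 0)
          = ∑ ω', (if ω' = ω then
              (if (fun n => ω' n (p.1 n)) = p.2 then (1:ℝ) else 0) else 0) := by
            refine Finset.sum_congr rfl fun ω' _ => ?_
            rcases eq_or_ne ω' ω with h | h
            · subst h; simp
            · simp [Pi.single_apply, h]
        _ = (if (fun n => ω n (p.1 n)) = p.2 then (1:ℝ) else 0) :=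
            Fintype.sum_ite_eq' ω fun ω' =>
              if (fun n => ω' n (p.1 n)) = p.2 then (1:ℝ) else 0
    rw [hΦ1, GammaAux.linear_eval g, Fintype.sum_prod_type, GammaAux.Fpsi]
    refine Finset.sum_congr rfl fun s _ => ?_
    calc ∑ lam : ∀ n, Λ n, (if (fun n => ω n (s n)) = lam then (1:ℝ) else 0)
          * g (Pi.single (s, lam) 1)
        = ∑ lam : ∀ n, Λ n, (if (fun n => ω n (s n)) = lam then ψ s lam else 0) := by
          refine Finset.sum_congr rfl fun lam _ => ?_
          rw [hψ]
          split_ifs <;> simp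
      _ = ψ s fun n => ω n (s n) :=
          Fintype.sum_ite_eq (fun n => ω n (s n)) (ψ s)
  -- evaluate on a near-extremal point of the ball
  obtain ⟨ωm, hωm⟩ := GammaAux.exists_abs_Fpsi ψ
  set c : ℝ := if 0 ≤ GammaAux.Fpsi ψ ωm then g' else -g' with hc
  have habsc : |c| = g' := by
    rw [hc]
    split_ifs <;> simp [abs_of_nonneg hg'0]
  set xm : (∀ n, Fin (S n) → Λ n) → ℝ := Pi.single ωm c with hxm
  have hsingle : ∀ ω, xm ω = if ω = ωm then c else 0 := by
    intro ω
    rw [hxm]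
    rcases eq_or_ne ω ωm with h | h
    · subst h; simp
    · simp [Pi.single_apply, h]
  have hxball : xm ∈ sB := by
    rw [hsB, Set.mem_setOf_eq]
    have h5 : ∀ ω, |xm ω| = if ω = ωm then |c| else 0 := by
      intro ω
      rw [hsingle ω]
      split_ifs <;> simp
    calc ∑ ω, |xm ω| = ∑ ω, (if ω = ωm then |c| else 0) :=
          Finset.sum_congr rfl fun ω _ => h5 ω
      _ = |c| := Fintype.sum_ite_eq' ωm fun _ => |c|
      _ ≤ g' := le_of_eq habsc
  have hfx : f xm = c * GammaAux.Fpsi ψ ωm := by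
    rw [hf_eval]
    calc ∑ ω, xm ω * f (Pi.single ω 1)
        = ∑ ω, (if ω = ωm then c * f (Pi.single ω 1) else 0) := by
          refine Finset.sum_congr rfl fun ω _ => ?_
          rw [hsingle ω]
          split_ifs <;> simp
      _ = c * f (Pi.single ωm 1) :=
          Fintype.sum_ite_eq' ωm fun ω => c * f (Pi.single ω 1)
      _ = c * GammaAux.Fpsi ψ ωm := by rw [hF]
  have hlow : g' * bellB ψ ≤ c * GammaAux.Fpsi ψ ωm := by
    have h6 : c * GammaAux.Fpsi ψ ωm = g' * |GammaAux.Fpsi ψ ωm| := by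
      rw [hc]
      split_ifs with h
      · rw [abs_of_nonneg h]
      · rw [abs_of_neg (not_le.mp h)]; ring
    rw [h6]
    exact mul_le_mul_of_nonneg_left hωm hg'0
  have hub : c * GammaAux.Fpsi ψ ωm < u := by
    have h7 := hfu _ hxball
    rwa [hfx] at h7
  have hc₀ : f μ₀ = ∑ s : ∀ n, Fin (S n), ∑ lam : ∀ n, Λ n, ψ s lam * P s lam := by
    rw [GammaAux.pairing hμ₀m ψ, hf_eval]
    refine Finset.sum_congr rfl fun ω _ => ?_
    rw [hF]
  have hvK : v < f μ₀ := hfv μ₀ (by rw [hK, Set.mem_setOf_eq]; exact ⟨hμ₀n, hμ₀m⟩)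
  have hchain : g' * bellB ψ
      < ∑ s : ∀ n, Fin (S n), ∑ lam : ∀ n, Λ n, ψ s lam * P s lam := by
    rw [← hc₀]
    linarith
  have hB0 : bellB ψ ≠ 0 := by
    intro h
    have hzero : ∀ ω, GammaAux.Fpsi ψ ω = 0 := fun ω =>
      abs_eq_zero.mp (le_antisymm (h ▸ GammaAux.abs_Fpsi_le ψ ω) (abs_nonneg _))
    have h8 : ∑ s : ∀ n, Fin (S n), ∑ lam : ∀ n, Λ n, ψ s lam * P s lam = 0 := by
      rw [GammaAux.pairing hμ₀m ψ]
      simp [hzero]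
    rw [h8, h, mul_zero] at hchain
    exact lt_irrefl 0 hchain
  have hBpos : 0 < bellB ψ := (GammaAux.bellB_nonneg ψ).lt_of_ne (Ne.symm hB0)
  have hmem : |(∑ s : ∀ n, Fin (S n), ∑ lam : ∀ n, Λ n, ψ s lam * P s lam) / bellB ψ|
      ∈ R := ⟨ψ, hB0, rfl⟩
  have hle := le_csSup hRb hmem
  have hgt : g' < (∑ s : ∀ n, Fin (S n), ∑ lam : ∀ n, Λ n, ψ s lam * P s lam)
      / bellB ψ := by
    rw [lt_div_iff₀ hBpos]
    exact hchain
  have habs := le_abs_self ((∑ s : ∀ n, Fin (S n), ∑ lam : ∀ n, Λ n, ψ s lam * P s lam)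
      / bellB ψ)
  linarith
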